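/- Example Shannon-flow inequality: For every polymatroid h on the four-element ground set {A, B, C, D}, 2·h({A,B,C,D}) ≤ h({A,B}) + h({B,C}) + h({C,D}) + ( h({A,C,D}) − h({A,C}) ) + ( h({A,B,D}) − h({B,D}) ). -/
import Mathlib

open Finset

/-- A polymatroid on a finite ground set (here `Fin 4`, with `A = 0`, `B = 1`,
`C = 2`, `D = 3`): a nonnegative set function with `h ∅ = 0` that is monotone
and submodular. -/
def IsPolymatroid (h : Finset (Fin 4) → ℝ) : Prop :=
  h ∅ = 0 ∧ (∀ S, 0 ≤ h S) ∧ (∀ X Y, X ⊆ Y → h X ≤ h Y) ∧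
    (∀ X Y, h (X ∪ Y) + h (X ∩ Y) ≤ h X + h Y)

/-- **Example Shannon-flow inequality:** for every polymatroid `h` on `{A,B,C,D}`,
`2·h(ABCD) ≤ h(AB) + h(BC) + h(CD) + (h(ACD) − h(AC)) + (h(ABD) − h(BD))`. -/
theorem example_shannon_flow_inequality
    (h : Finset (Fin 4) → ℝ) (hpoly : IsPolymatroid h) :
    2 * h Finset.univ ≤
      h {0, 1} + h {1, 2} + h {2, 3} +
        (h {0, 2, 3} - h {0, 2}) + (h {0, 1, 3} - h {1, 3}) := by
  obtain ⟨h0, _, _, hsub⟩ := hpoly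
  have s1 := hsub {0, 1, 2} {0, 2, 3}
  have e1u : ({0, 1, 2} : Finset (Fin 4)) ∪ {0, 2, 3} = Finset.univ := by decide
  have e1i : ({0, 1, 2} : Finset (Fin 4)) ∩ {0, 2, 3} = {0, 2} := by decide
  rw [e1u, e1i] at s1
  have s2 := hsub {0, 1, 3} {1, 2, 3}
  have e2u : ({0, 1, 3} : Finset (Fin 4)) ∪ {1, 2, 3} = Finset.univ := by decide
  have e2i : ({0, 1, 3} : Finset (Fin 4)) ∩ {1, 2, 3} = {1, 3} := by decide
  rw [e2u, e2i] at s2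
  have s3 := hsub {0, 1} {1, 2}
  have e3u : ({0, 1} : Finset (Fin 4)) ∪ {1, 2} = {0, 1, 2} := by decide
  have e3i : ({0, 1} : Finset (Fin 4)) ∩ {1, 2} = {1} := by decide
  rw [e3u, e3i] at s3
  have s4 := hsub {1} {2, 3}
  have e4u : ({1} : Finset (Fin 4)) ∪ {2, 3} = {1, 2, 3} := by decide
  have e4i : ({1} : Finset (Fin 4)) ∩ {2, 3} = ∅ := by decide
  rw [e4u, e4i, h0] at s4
  linarith
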